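/- Let s ∈ (−1,0), C₀ > 0, and let h : (0,1] → ℝ be continuous with |h(t)| ≤ C₀ for all t ∈ (0,1]. If y : (0,1] → ℝ is twice continuously differentiable and satisfies y''(t) + (s/t)·y'(t) = h(t) for all t ∈ (0,1], then there exist constants c₁, c₂ ∈ ℝ and a function f : (0,1] → ℝ with |f(t)| ≤ C·C₀·t² for all t ∈ (0,1] (where C depends only on s) such that y(t) = c₁·t^{1−s} + c₂ + f(t) on (0,1]. -/

import Mathlib

noncomputable section
open Metric Set Filter
open scoped Topology

/-- structure of solutions of `y'' + (s/t) y' = h` on `(0,1]` for `s ∈ (-1,0)`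
and bounded `h`: `y(t) = c₁ t^{1-s} + c₂ + f(t)` with `|f(t)| ≤ C C₀ t²`, `C = C(s)`. -/
theorem statement18 (s : ℝ) (hs : s ∈ Ioo (-1:ℝ) 0) :
    ∃ C > 0, ∀ C₀ : ℝ, 0 < C₀ → ∀ h y y' y'' : ℝ → ℝ,
      ContinuousOn h (Ioc (0:ℝ) 1) →
      (∀ t ∈ Ioc (0:ℝ) 1, |h t| ≤ C₀) →
      (∀ t ∈ Ioc (0:ℝ) 1, HasDerivWithinAt y (y' t) (Ioc (0:ℝ) 1) t) →
      (∀ t ∈ Ioc (0:ℝ) 1, HasDerivWithinAt y' (y'' t) (Ioc (0:ℝ) 1) t) →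
      ContinuousOn y'' (Ioc (0:ℝ) 1) →
      (∀ t ∈ Ioc (0:ℝ) 1, y'' t + (s / t) * y' t = h t) →
      ∃ (c₁ c₂ : ℝ) (f : ℝ → ℝ),
        (∀ t ∈ Ioc (0:ℝ) 1, |f t| ≤ C * C₀ * t ^ 2) ∧
        ∀ t ∈ Ioc (0:ℝ) 1, y t = c₁ * t ^ (1 - s) + c₂ + f t := by
  obtain ⟨hs1, hs0⟩ := hs
  have hsp : (0:ℝ) < s + 1 := by linarith
  refine ⟨1 / (2 * (s + 1)), by positivity, ?_⟩
  intro C₀ hC₀ h y y' y'' hcont hhb hy hy' hy''c hode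
  have h1s : (0:ℝ) < 1 - s := by linarith
  -- continuity of y, y'
  have hycont : ContinuousOn y (Ioc (0:ℝ) 1) := fun t ht =>
    (hy t ht).continuousWithinAt
  have hy'cont : ContinuousOn y' (Ioc (0:ℝ) 1) := fun t ht =>
    (hy' t ht).continuousWithinAt
  -- the integrand v^s * h v
  have hφcont : ContinuousOn (fun v : ℝ => v ^ s * h v) (Ioc (0:ℝ) 1) := by
    exact (ContinuousOn.rpow_const continuousOn_id
      (fun x hx => Or.inl (ne_of_gt hx.1))).mul hcont
  have hmeasIoc : MeasurableSet (Ioc (0:ℝ) 1) := measurableSet_Ioc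
  have hφmeas : MeasureTheory.AEStronglyMeasurable (fun v : ℝ => v ^ s * h v)
      (MeasureTheory.volume.restrict (Ioc (0:ℝ) 1)) :=
    hφcont.aestronglyMeasurable hmeasIoc
  -- interval integrability of v^s * h v on 0..t for t ∈ (0,1]
  have hφint : ∀ t ∈ Ioc (0:ℝ) 1,
      IntervalIntegrable (fun v : ℝ => v ^ s * h v) MeasureTheory.volume 0 t := by
    intro t ht
    rw [intervalIntegrable_iff_integrableOn_Ioc_of_le ht.1.le]
    have hgint : MeasureTheory.IntegrableOn (fun v : ℝ => C₀ * v ^ s)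
        (Ioc (0:ℝ) t) MeasureTheory.volume := by
      have := (intervalIntegral.intervalIntegrable_rpow' (a := 0) (b := t) hs1).const_mul C₀
      rwa [intervalIntegrable_iff_integrableOn_Ioc_of_le ht.1.le] at this
    refine hgint.integrable.mono' ?_ ?_
    · exact hφmeas.mono_measure
        (MeasureTheory.Measure.restrict_mono (Ioc_subset_Ioc le_rfl ht.2) le_rfl)
    · filter_upwards [MeasureTheory.ae_restrict_mem measurableSet_Ioc] with v hv
      have hv1 : v ∈ Ioc (0:ℝ) 1 := ⟨hv.1, hv.2.trans ht.2⟩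
      have h1 : |h v| ≤ C₀ := hhb v hv1
      have h2 : (0:ℝ) ≤ v ^ s := Real.rpow_nonneg hv.1.le s
      calc ‖v ^ s * h v‖ = v ^ s * |h v| := by
            rw [Real.norm_eq_abs, abs_mul, abs_of_nonneg h2]
      _ ≤ v ^ s * C₀ := by exact mul_le_mul_of_nonneg_left h1 h2
      _ = C₀ * v ^ s := mul_comm _ _
  set G : ℝ → ℝ := fun t => ∫ v in (0:ℝ)..t, v ^ s * h v with hGdef
  -- derivative of u ↦ u^s * y' u
  have hP : ∀ x ∈ Ioo (0:ℝ) 1, HasDerivAt (fun u : ℝ => u ^ s * y' u)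
      (x ^ s * h x) x := by
    intro x hx
    have hx0 : (0:ℝ) < x := hx.1
    have hmem : Ioc (0:ℝ) 1 ∈ 𝓝 x := Ioc_mem_nhds hx.1 hx.2
    have hy'x : HasDerivAt y' (y'' x) x :=
      (hy' x ⟨hx.1, hx.2.le⟩).hasDerivAt hmem
    have hr : HasDerivAt (fun u : ℝ => u ^ s) (s * x ^ (s - 1)) x :=
      Real.hasDerivAt_rpow_const (Or.inl hx0.ne')
    have : HasDerivAt (fun u : ℝ => u ^ s * y' u) (s * x ^ (s - 1) * y' x + x ^ s * y'' x) x := hr.mul hy'x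
    convert this using 1
    have hode' := hode x ⟨hx.1, hx.2.le⟩
    have hrw : x ^ (s - 1) = x ^ s / x := by
      rw [Real.rpow_sub hx0, Real.rpow_one]
    rw [← hode', hrw]
    field_simp
    ring
  -- key identity 1 : t^s y' t = A + G t on (0,1]
  set A : ℝ := y' 1 - G 1 with hAdef
  have key1 : ∀ t ∈ Ioc (0:ℝ) 1, t ^ s * y' t = A + G t := by
    intro t ht
    have hsub : Icc t 1 ⊆ Ioc (0:ℝ) 1 := fun x hx => ⟨lt_of_lt_of_le ht.1 hx.1, hx.2⟩
    have hint : IntervalIntegrable (fun v : ℝ => v ^ s * h v) MeasureTheory.volume t 1 :=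
      (hφcont.mono (show uIcc t 1 ⊆ Ioc 0 1 by
        rw [uIcc_of_le ht.2]; exact hsub)).intervalIntegrable
    have heq : ∫ v in t..1, v ^ s * h v = 1 ^ s * y' 1 - t ^ s * y' t := by
      refine intervalIntegral.integral_eq_sub_of_hasDeriv_right_of_le ht.2
        (((ContinuousOn.rpow_const continuousOn_id
          (fun x hx => Or.inl (ne_of_gt ((hsub hx).1)))).mul (hy'cont.mono hsub))) ?_ hint
      intro x hx
      exact (hP x ⟨ht.1.trans hx.1, hx.2⟩).hasDerivWithinAt
    have hsplit : G 1 - G t = ∫ v in t..1, v ^ s * h v :=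
      intervalIntegral.integral_interval_sub_left (hφint 1 ⟨one_pos, le_rfl⟩) (hφint t ht)
    rw [← hsplit, Real.one_rpow] at heq
    simp only [hAdef]
    linarith
  -- formula for y'
  have hy'form : ∀ t ∈ Ioc (0:ℝ) 1, y' t = A * t ^ (-s) + t ^ (-s) * G t := by
    intro t ht
    have h1 := key1 t ht
    have hts : t ^ s ≠ 0 := (Real.rpow_pos_of_pos ht.1 s).ne'
    have hinv : t ^ (-s) = (t ^ s)⁻¹ := by
      rw [Real.rpow_neg ht.1.le]
    rw [hinv]
    field_simp
    linarith [key1 t ht]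
  -- bound on G
  have hGb : ∀ u ∈ Ioc (0:ℝ) 1, |G u| ≤ C₀ / (s + 1) * u ^ (s + 1) := by
    intro u hu
    have hb : ∀ᵐ v ∂(MeasureTheory.volume.restrict (uIoc (0:ℝ) u)),
        ‖v ^ s * h v‖ ≤ C₀ * v ^ s := by
      have : uIoc (0:ℝ) u = Ioc 0 u := uIoc_of_le hu.1.le
      rw [this]
      filter_upwards [MeasureTheory.ae_restrict_mem measurableSet_Ioc] with v hv
      have h1 : |h v| ≤ C₀ := hhb v ⟨hv.1, hv.2.trans hu.2⟩
      have h2 : (0:ℝ) ≤ v ^ s := Real.rpow_nonneg hv.1.le s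
      calc ‖v ^ s * h v‖ = v ^ s * |h v| := by
            rw [Real.norm_eq_abs, abs_mul, abs_of_nonneg h2]
      _ ≤ v ^ s * C₀ := mul_le_mul_of_nonneg_left h1 h2
      _ = C₀ * v ^ s := mul_comm _ _
    have hbint : IntervalIntegrable (fun v : ℝ => C₀ * v ^ s) MeasureTheory.volume 0 u :=
      (intervalIntegral.intervalIntegrable_rpow' (a := 0) (b := u) hs1).const_mul C₀
    have := intervalIntegral.norm_integral_le_abs_of_norm_le hb hbint
    have hval : ∫ v in (0:ℝ)..u, C₀ * v ^ s = C₀ / (s + 1) * u ^ (s + 1) := by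
      rw [intervalIntegral.integral_const_mul, integral_rpow (Or.inl hs1),
        Real.zero_rpow hsp.ne']
      ring
    rw [hval] at this
    have hnn : (0:ℝ) ≤ C₀ / (s + 1) * u ^ (s + 1) := by
      have := Real.rpow_nonneg hu.1.le (s + 1)
      positivity
    calc |G u| ≤ |C₀ / (s + 1) * u ^ (s + 1)| := this
    _ = C₀ / (s + 1) * u ^ (s + 1) := abs_of_nonneg hnn
  -- continuity of G on Icc 0 1
  have hGcont : ContinuousOn G (Icc (0:ℝ) 1) := by
    have h01 : IntervalIntegrable (fun v : ℝ => v ^ s * h v) MeasureTheory.volume 0 1 :=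
      hφint 1 ⟨one_pos, le_rfl⟩
    have := intervalIntegral.continuousOn_primitive_interval (a := 0) (b := 1)
      (f := fun v : ℝ => v ^ s * h v) (μ := MeasureTheory.volume) ?_
    · rwa [uIcc_of_le zero_le_one] at this
    · rw [uIcc_of_le zero_le_one,
        integrableOn_Icc_iff_integrableOn_Ioc]
      rwa [intervalIntegrable_iff_integrableOn_Ioc_of_le zero_le_one] at h01
  -- the second integrand u^{-s} * G u
  have hψcont : ContinuousOn (fun u : ℝ => u ^ (-s) * G u) (Icc (0:ℝ) 1) := by
    exact (ContinuousOn.rpow_const continuousOn_id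
      (fun x _ => Or.inr (by linarith))).mul hGcont
  have hψb : ∀ u ∈ Ioc (0:ℝ) 1, |u ^ (-s) * G u| ≤ C₀ / (s + 1) * u := by
    intro u hu
    have h2 : (0:ℝ) ≤ u ^ (-s) := Real.rpow_nonneg hu.1.le _
    have : |u ^ (-s) * G u| = u ^ (-s) * |G u| := by
      rw [abs_mul, abs_of_nonneg h2]
    rw [this]
    calc u ^ (-s) * |G u| ≤ u ^ (-s) * (C₀ / (s + 1) * u ^ (s + 1)) :=
          mul_le_mul_of_nonneg_left (hGb u hu) h2
    _ = C₀ / (s + 1) * (u ^ (-s) * u ^ (s + 1)) := by ring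
    _ = C₀ / (s + 1) * u := by
          rw [← Real.rpow_add hu.1]
          norm_num
  have hψint : ∀ t ∈ Icc (0:ℝ) 1,
      IntervalIntegrable (fun u : ℝ => u ^ (-s) * G u) MeasureTheory.volume 0 t := by
    intro t ht
    exact (hψcont.mono (show uIcc 0 t ⊆ Icc 0 1 by
      rw [uIcc_of_le ht.1]; exact Icc_subset_Icc le_rfl ht.2)).intervalIntegrable
  set F : ℝ → ℝ := fun t => ∫ u in (0:ℝ)..t, u ^ (-s) * G u with hFdef
  -- bound on F
  have hFb : ∀ t ∈ Ioc (0:ℝ) 1, |F t| ≤ 1 / (2 * (s + 1)) * C₀ * t ^ 2 := by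
    intro t ht
    have hb : ∀ᵐ u ∂(MeasureTheory.volume.restrict (uIoc (0:ℝ) t)),
        ‖u ^ (-s) * G u‖ ≤ C₀ / (s + 1) * u := by
      have : uIoc (0:ℝ) t = Ioc 0 t := uIoc_of_le ht.1.le
      rw [this]
      filter_upwards [MeasureTheory.ae_restrict_mem measurableSet_Ioc] with u hu
      exact hψb u ⟨hu.1, hu.2.trans ht.2⟩
    have hbint : IntervalIntegrable (fun u : ℝ => C₀ / (s + 1) * u)
        MeasureTheory.volume 0 t := (intervalIntegral.intervalIntegrable_id).const_mul _
    have := intervalIntegral.norm_integral_le_abs_of_norm_le hb hbint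
    have hval : ∫ u in (0:ℝ)..t, C₀ / (s + 1) * u = 1 / (2 * (s + 1)) * C₀ * t ^ 2 := by
      rw [intervalIntegral.integral_const_mul, integral_id]
      field_simp
      ring
    rw [hval] at this
    have hnn : (0:ℝ) ≤ 1 / (2 * (s + 1)) * C₀ * t ^ 2 := by positivity
    calc |F t| ≤ |1 / (2 * (s + 1)) * C₀ * t ^ 2| := this
    _ = _ := abs_of_nonneg hnn
  -- key identity 2
  refine ⟨A / (1 - s), y 1 - A / (1 - s) - F 1, F, fun t ht => hFb t ht, ?_⟩
  intro t ht
  have hsub : Icc t 1 ⊆ Ioc (0:ℝ) 1 := fun x hx => ⟨lt_of_lt_of_le ht.1 hx.1, hx.2⟩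
  have hsub' : Icc t 1 ⊆ Icc (0:ℝ) 1 := Icc_subset_Icc ht.1.le le_rfl
  have hy'int : IntervalIntegrable y' MeasureTheory.volume t 1 :=
    (hy'cont.mono (show uIcc t 1 ⊆ Ioc 0 1 by
      rw [uIcc_of_le ht.2]; exact hsub)).intervalIntegrable
  have heq : ∫ u in t..1, y' u = y 1 - y t := by
    refine intervalIntegral.integral_eq_sub_of_hasDeriv_right_of_le ht.2
      (hycont.mono hsub) ?_ hy'int
    intro x hx
    have hmem : Ioc (0:ℝ) 1 ∈ 𝓝 x := Ioc_mem_nhds (ht.1.trans hx.1) hx.2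
    exact ((hy x ⟨ht.1.trans hx.1, hx.2.le⟩).hasDerivAt hmem).hasDerivWithinAt
  -- rewrite the integral of y'
  have hcongr : ∫ u in t..1, y' u
      = ∫ u in t..1, (A * u ^ (-s) + u ^ (-s) * G u) := by
    refine intervalIntegral.integral_congr ?_
    intro u hu
    rw [uIcc_of_le ht.2] at hu
    exact hy'form u (hsub hu)
  have hint1 : IntervalIntegrable (fun u : ℝ => A * u ^ (-s)) MeasureTheory.volume t 1 :=
    ((intervalIntegral.intervalIntegrable_rpow' (a := t) (b := 1) (by linarith : (-1:ℝ) < -s)).const_mul A)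
  have hint2 : IntervalIntegrable (fun u : ℝ => u ^ (-s) * G u) MeasureTheory.volume t 1 :=
    (hψcont.mono (show uIcc t 1 ⊆ Icc 0 1 by
      rw [uIcc_of_le ht.2]; exact hsub')).intervalIntegrable
  have hadd : ∫ u in t..1, (A * u ^ (-s) + u ^ (-s) * G u)
      = (∫ u in t..1, A * u ^ (-s)) + ∫ u in t..1, u ^ (-s) * G u :=
    intervalIntegral.integral_add hint1 hint2
  have hval1 : ∫ u in t..1, A * u ^ (-s) = A * ((1 - t ^ (1 - s)) / (1 - s)) := by
    rw [intervalIntegral.integral_const_mul, integral_rpow (Or.inl (by linarith))]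
    rw [Real.one_rpow, show -s + 1 = 1 - s by ring]
  have hval2 : ∫ u in t..1, u ^ (-s) * G u = F 1 - F t :=
    (intervalIntegral.integral_interval_sub_left
      (hψint 1 ⟨zero_le_one, le_rfl⟩) (hψint t ⟨ht.1.le, ht.2⟩)).symm
  have hfin : y 1 - y t = A * ((1 - t ^ (1 - s)) / (1 - s)) + (F 1 - F t) := by
    rw [← heq, hcongr, hadd, hval1, hval2]
  have h1s' : (1:ℝ) - s ≠ 0 := ne_of_gt h1s
  field_simp at hfin ⊢
  linarith
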